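/- Let T2 : U → V be a surjective K-linear map with finite-dimensional kernel, and let B ≤ U* be a subspace with Ker T2 ∩ B⊥ = {0} (i.e., (T2, B) is semi-regular). Then there exists a subspace B2 ≤ B such that (T2, B2) is regular, i.e., U = Ker T2 ⊕ B2⊥. -/

import Mathlib

theorem stmt_17 {K U V : Type*} [Field K]
    [AddCommGroup U] [Module K U] [AddCommGroup V] [Module K V]
    (T2 : U →ₗ[K] V) (hT2 : Function.Surjective T2)
    [FiniteDimensional K (LinearMap.ker T2)]
    (B : Submodule K (Module.Dual K U))
    (hsemi : LinearMap.ker T2 ⊓ B.dualCoannihilator = ⊥) :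
    ∃ B2 : Submodule K (Module.Dual K U), B2 ≤ B ∧
      IsCompl (LinearMap.ker T2) B2.dualCoannihilator := by
  classical
  set N := LinearMap.ker T2 with hN
  -- restriction map
  let r : Module.Dual K U →ₗ[K] Module.Dual K N := N.subtype.dualMap
  set W : Submodule K (Module.Dual K N) := B.map r with hW
  have hWbot : W.dualCoannihilator = ⊥ := by
    rw [Submodule.eq_bot_iff]
    intro x hx
    rw [Submodule.mem_dualCoannihilator] at hx
    have hx1 : (x : U) ∈ B.dualCoannihilator := by
      rw [Submodule.mem_dualCoannihilator]
      intro φ hφ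
      exact hx (r φ) (Submodule.mem_map_of_mem hφ)
    have : (x : U) ∈ N ⊓ B.dualCoannihilator := ⟨x.2, hx1⟩
    rw [hsemi] at this
    exact Subtype.ext this
  have hWtop : W = ⊤ := by
    have h1 := Subspace.finrank_add_finrank_dualCoannihilator_eq W
    rw [hWbot, finrank_bot, add_zero] at h1
    exact Submodule.eq_top_of_finrank_eq (h1.trans Subspace.dual_finrank_eq.symm)
  let b := Module.finBasis K N
  have hβ : ∀ i, ∃ φ ∈ B, r φ = b.dualBasis i := by
    intro i
    have : b.dualBasis i ∈ W := hWtop ▸ Submodule.mem_top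
    obtain ⟨φ, hφ, hφ'⟩ := this
    exact ⟨φ, hφ, hφ'⟩
  choose β hβB hβdual using hβ
  have hβval : ∀ i (n : N), β i (n : U) = b.dualBasis i n := by
    intro i n
    have := congrArg (fun f => f n) (hβdual i)
    simpa [r] using this
  refine ⟨Submodule.span K (Set.range β), ?_, ?_⟩
  · rw [Submodule.span_le]
    rintro _ ⟨i, rfl⟩
    exact hβB i
  have hmem : ∀ x : U, x ∈ (Submodule.span K (Set.range β)).dualCoannihilator ↔
      ∀ i, β i x = 0 := by
    intro x
    constructor
    · intro hx i
      rw [Submodule.mem_dualCoannihilator] at hx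
      exact hx (β i) (Submodule.subset_span ⟨i, rfl⟩)
    · intro hx
      have := Submodule.coe_dualCoannihilator_span (R := K) (Set.range β)
      rw [← SetLike.mem_coe, this]
      rintro f ⟨i, rfl⟩
      exact hx i
  constructor
  · rw [disjoint_iff, Submodule.eq_bot_iff]
    intro x hx
    rw [Submodule.mem_inf] at hx
    obtain ⟨hxN, hxC⟩ := hx
    rw [hmem] at hxC
    have : (⟨x, hxN⟩ : N) = 0 := by
      apply b.forall_coord_eq_zero_iff.mp
      intro i
      have := hxC i
      rw [hβval i ⟨x, hxN⟩] at this
      simpa [Module.Basis.coe_dualBasis] using this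
    exact congrArg Subtype.val this
  · rw [codisjoint_iff, Submodule.eq_top_iff']
    intro u
    set p : U := ∑ i, β i u • ((b i : N) : U) with hp
    have hpN : p ∈ N := by
      apply Submodule.sum_mem
      intro i _
      exact Submodule.smul_mem _ _ (b i).2
    have hupC : u - p ∈ (Submodule.span K (Set.range β)).dualCoannihilator := by
      rw [hmem]
      intro j
      have hδ : ∀ i, β j ((b i : N) : U) = if i = j then 1 else 0 := by
        intro i
        rw [hβval j (b i), Module.Basis.dualBasis_apply_self]
      simp only [map_sub, hp, map_sum, map_smul, smul_eq_mul, hδ, mul_ite, mul_one, mul_zero]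
      simp
    have : u = p + (u - p) := by abel
    rw [this]
    exact Submodule.add_mem_sup hpN hupC
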